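/- Let S be a finite nonabelian simple group, I a set, and G = S^I the direct power (all functions I → S with pointwise multiplication). Then every finite group D that is a quotient of G by an abstract normal subgroup (i.e., D is finite and there exists a surjective group homomorphism G → D) is semisimple, that is, D is isomorphic to a direct product of finitely many nonabelian finite simple groups. -/
import Mathlib

open Classical

set_option linter.unusedSectionVars false

section Word

variable {S : Type*} [Group S] [Finite S]

/-- Products of exactly `k` conjugates of `s`. -/
def conjProds (s : S) (k : ℕ) : Set S :=
  {x | ∃ l : List S, l.length = k ∧ (∀ y ∈ l, ∃ c : S, y = c * s * c⁻¹) ∧ l.prod = x}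

lemma one_mem_conjProds_zero (s : S) : (1 : S) ∈ conjProds s 0 := ⟨[], rfl, by simp, rfl⟩

lemma conjProds_mul {s : S} {k m : ℕ} {x y : S} (hx : x ∈ conjProds s k)
    (hy : y ∈ conjProds s m) : x * y ∈ conjProds s (k + m) := by
  obtain ⟨l₁, hl₁, hc₁, hp₁⟩ := hx
  obtain ⟨l₂, hl₂, hc₂, hp₂⟩ := hy
  exact ⟨l₁ ++ l₂, by simp [hl₁, hl₂], by
    intro z hz; rcases List.mem_append.1 hz with h | h
    · exact hc₁ z h
    · exact hc₂ z h, by simp [hp₁, hp₂]⟩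

lemma pow_mem_conjProds (s : S) (k : ℕ) : s ^ k ∈ conjProds s k :=
  ⟨List.replicate k s, List.length_replicate .., by
    intro y hy; rw [List.eq_of_mem_replicate hy]; exact ⟨1, by group⟩,
    List.prod_replicate k s⟩

lemma pow_mem_conjProds_mul {s x : S} {n : ℕ} (hx : x ∈ conjProds s n) (m : ℕ) :
    x ^ m ∈ conjProds s (m * n) := by
  induction m with
  | zero => simpa using one_mem_conjProds_zero s
  | succ j ih =>
    have := conjProds_mul ih hx
    rw [pow_succ]
    convert this using 2
    ring

lemma one_mem_conjProds_card (s : S) : (1 : S) ∈ conjProds s (Nat.card S) := by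
  simpa [pow_card_eq_one'] using pow_mem_conjProds s (Nat.card S)

lemma conjProds_mono_card {s : S} {k : ℕ} : conjProds s k ⊆ conjProds s (k + Nat.card S) := by
  intro x hx
  simpa using conjProds_mul hx (one_mem_conjProds_card s)

lemma conjProds_mono_card_mul {s : S} {k m : ℕ} (h : k ≤ m) :
    conjProds s (k * Nat.card S) ⊆ conjProds s (m * Nat.card S) := by
  induction m with
  | zero => simpa [Nat.le_zero.1 h] using fun x hx => hx
  | succ n ih =>
    rcases Nat.lt_or_ge k (n+1) with h' | h'
    · intro x hx
      have := ih (by omega) hx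
      simpa [Nat.succ_mul] using conjProds_mono_card this
    · have : k = n + 1 := le_antisymm h h'
      subst this; exact fun x hx => hx

lemma prod_map_conj (c : S) (l : List S) :
    (l.map fun y => c * y * c⁻¹).prod = c * l.prod * c⁻¹ := by
  induction l with
  | nil => simp
  | cons x xs ih => rw [List.map_cons, List.prod_cons, List.prod_cons, ih]; group

/-- The union of all `conjProds s (k * card S)` is a (normal) subgroup. -/
def conjSubgroup (s : S) : Subgroup S where
  carrier := ⋃ k : ℕ, conjProds s (k * Nat.card S)
  one_mem' := Set.mem_iUnion.2 ⟨0, by simpa using one_mem_conjProds_zero s⟩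
  mul_mem' := by
    rintro a b ha hb
    obtain ⟨k, hk⟩ := Set.mem_iUnion.1 ha
    obtain ⟨m, hm⟩ := Set.mem_iUnion.1 hb
    exact Set.mem_iUnion.2 ⟨k + m, by simpa [add_mul] using conjProds_mul hk hm⟩
  inv_mem' := by
    intro a ha
    obtain ⟨k, hk⟩ := Set.mem_iUnion.1 ha
    have hinv : a⁻¹ = a ^ (Nat.card S - 1) := by
      have hcard : 0 < Nat.card S := Nat.card_pos
      have h2 : a * a ^ (Nat.card S - 1) = 1 := by
        rw [← pow_succ', Nat.sub_add_cancel hcard]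
        exact pow_card_eq_one'
      exact inv_eq_of_mul_eq_one_right h2
    rw [hinv]
    exact Set.mem_iUnion.2 ⟨(Nat.card S - 1) * k, by
      have := pow_mem_conjProds_mul hk (Nat.card S - 1)
      convert this using 2
      ring⟩

lemma conjSubgroup_normal (s : S) : (conjSubgroup s).Normal := by
  constructor
  intro a ha c
  obtain ⟨k, hk⟩ := Set.mem_iUnion.1 ha
  obtain ⟨l, hl, hc, hp⟩ := hk
  refine Set.mem_iUnion.2 ⟨k, ⟨l.map (fun y => c * y * c⁻¹), by simp [hl], ?_, ?_⟩⟩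
  · intro z hz
    obtain ⟨y, hy, rfl⟩ := List.mem_map.1 hz
    obtain ⟨d, rfl⟩ := hc y hy
    exact ⟨c * d, by group⟩
  · rw [← hp]
    exact prod_map_conj c l

lemma center_eq_bot (hS : IsSimpleGroup S) (hna : ∃ a b : S, a * b ≠ b * a) :
    Subgroup.center S = ⊥ := by
  rcases hS.eq_bot_or_eq_top_of_normal (Subgroup.center S) inferInstance with h | h
  · exact h
  · exfalso
    obtain ⟨a, b, hab⟩ := hna
    apply hab
    have hb : b ∈ Subgroup.center S := h ▸ Subgroup.mem_top b
    exact Subgroup.mem_center_iff.1 hb a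

lemma conjSubgroup_eq_top (hS : IsSimpleGroup S) (hna : ∃ a b : S, a * b ≠ b * a)
    {s : S} (hs : s ≠ 1) : conjSubgroup s = ⊤ := by
  rcases hS.eq_bot_or_eq_top_of_normal _ (conjSubgroup_normal s) with h | h
  · exfalso
    -- find c with c * s * c⁻¹ ≠ s
    have : ∃ c : S, c * s * c⁻¹ ≠ s := by
      by_contra hcon
      push_neg at hcon
      have : s ∈ Subgroup.center S := by
        rw [Subgroup.mem_center_iff]
        intro g
        have := hcon g
        calc g * s = (g * s * g⁻¹) * g := by group
        _ = s * g := by rw [hcon g]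
      rw [center_eq_bot hS hna] at this
      exact hs (Subgroup.mem_bot.1 this)
    obtain ⟨c, hc⟩ := this
    -- x := (c s c⁻¹) * s^(card S - 1) ∈ conjProds s (card S), x ≠ 1
    have hcard : 0 < Nat.card S := Nat.card_pos
    have hx : (c * s * c⁻¹) * s ^ (Nat.card S - 1) ∈ conjProds s (Nat.card S) := by
      have h1 : c * s * c⁻¹ ∈ conjProds s 1 :=
        ⟨[c * s * c⁻¹], rfl, by
          intro y hy; rw [List.mem_singleton] at hy; exact ⟨c, hy⟩, by simp⟩
      have := conjProds_mul h1 (pow_mem_conjProds s (Nat.card S - 1))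
      rwa [show 1 + (Nat.card S - 1) = Nat.card S by omega] at this
    have hxne : (c * s * c⁻¹) * s ^ (Nat.card S - 1) ≠ 1 := by
      intro habs
      apply hc
      have hs1 : s ^ (Nat.card S - 1) = s⁻¹ := by
        refine (inv_eq_of_mul_eq_one_right ?_).symm
        rw [← pow_succ', Nat.sub_add_cancel hcard]
        exact pow_card_eq_one'
      rw [hs1] at habs
      rw [mul_inv_eq_one] at habs
      exact habs
    have hmem : (c * s * c⁻¹) * s ^ (Nat.card S - 1) ∈ conjSubgroup s :=
      Set.mem_iUnion.2 ⟨1, by simpa using hx⟩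
    rw [h] at hmem
    exact hxne (Subgroup.mem_bot.1 hmem)
  · exact h

/-- Uniform word lemma: there is `N > 0` such that every `t` is a product of exactly `N`
conjugates of any `s ≠ 1`. -/
lemma exists_uniform_word (hS : IsSimpleGroup S) (hna : ∃ a b : S, a * b ≠ b * a) :
    ∃ N : ℕ, 0 < N ∧ ∀ s t : S, s ≠ 1 → t ∈ conjProds s N := by
  have : ∀ p : S × S, ∃ k : ℕ, p.1 = 1 ∨ p.2 ∈ conjProds p.1 (k * Nat.card S) := by
    rintro ⟨s, t⟩
    by_cases hs : s = 1
    · exact ⟨0, Or.inl hs⟩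
    · have : t ∈ conjSubgroup s := by rw [conjSubgroup_eq_top hS hna hs]; trivial
      obtain ⟨k, hk⟩ := Set.mem_iUnion.1 this
      exact ⟨k, Or.inr hk⟩
  choose k hk using this
  have : Fintype S := Fintype.ofFinite S
  refine ⟨((Finset.univ.sup (fun p : S × S => k p)) + 1) * Nat.card S, ?_, ?_⟩
  · have : 0 < Nat.card S := Nat.card_pos
    positivity
  · intro s t hs
    have h := (hk (s, t)).resolve_left hs
    exact conjProds_mono_card_mul
      (Nat.le_succ_of_le (Finset.le_sup (Finset.mem_univ (s, t)))) h

end Word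
open Classical
set_option linter.unusedSectionVars false

section Ulim
variable {S : Type*} [Group S] [Finite S] {I : Type*}

lemma ulim_exists (U : Ultrafilter I) (f : I → S) : ∃ s : S, {i | f i = s} ∈ U := by
  by_contra h
  push_neg at h
  have h2 : ∀ s : S, {i | f i = s}ᶜ ∈ U := fun s => Ultrafilter.compl_mem_iff_notMem.2 (h s)
  have h3 : (⋂ s : S, {i | f i = s}ᶜ) ∈ U := Filter.iInter_mem.2 h2
  have h4 : (⋂ s : S, {i | f i = s}ᶜ) = (∅ : Set I) := by
    ext i; simp
  rw [h4] at h3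
  exact Ultrafilter.empty_notMem h3

noncomputable def ulim (U : Ultrafilter I) (f : I → S) : S := choose (ulim_exists U f)

lemma ulim_mem (U : Ultrafilter I) (f : I → S) : {i | f i = ulim U f} ∈ U :=
  choose_spec (ulim_exists U f)

lemma ulim_eq_of_mem {U : Ultrafilter I} {f : I → S} {s : S} (h : {i | f i = s} ∈ U) :
    ulim U f = s := by
  by_contra hne
  have h2 := Filter.inter_mem (ulim_mem U f) h
  have h3 : {i | f i = ulim U f} ∩ {i | f i = s} = ∅ := by
    ext i
    simp only [Set.mem_inter_iff, Set.mem_setOf_eq, Set.mem_empty_iff_false, iff_false, not_and]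
    intro h4 h5
    exact hne (h4 ▸ h5)
  rw [h3] at h2
  exact Ultrafilter.empty_notMem h2

lemma mem_of_ulim_eq_one {U : Ultrafilter I} {f : I → S} (h : ulim U f = 1) :
    {i | f i = 1} ∈ U := h ▸ ulim_mem U f

noncomputable def ulimHom (U : Ultrafilter I) : (I → S) →* S where
  toFun f := ulim U f
  map_one' := ulim_eq_of_mem (Filter.univ_mem' fun i => rfl)
  map_mul' f g := by
    refine ulim_eq_of_mem ?_
    refine Filter.mem_of_superset (Filter.inter_mem (ulim_mem U f) (ulim_mem U g)) ?_
    rintro i ⟨h1, h2⟩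
    simp only [Set.mem_setOf_eq] at *
    rw [Pi.mul_apply, h1, h2]

lemma ultrafilter_exists_mem_notMem {U V : Ultrafilter I} (h : U ≠ V) :
    ∃ A, A ∈ U ∧ A ∉ V := by
  by_contra hc
  push_neg at hc
  exact h (Ultrafilter.eq_of_le hc).symm

end Ulim
section Ker
variable {S : Type*} [Group S] [Finite S] {I : Type*} {D : Type*} [Group D]

lemma ker_support (hS : IsSimpleGroup S) (hna : ∃ a b : S, a * b ≠ b * a)
    (φ : (I → S) →* D) {f g : I → S} (hf : φ f = 1)
    (hz : ∀ i, f i = 1 → g i = 1) : φ g = 1 := by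
  obtain ⟨N, hN, hw⟩ := exists_uniform_word hS hna
  have hex : ∀ i, ∃ l : List S, l.length = N ∧
      (∀ y ∈ l, ∃ c : S, y = c * (f i) * c⁻¹) ∧ l.prod = g i := by
    intro i
    by_cases h : f i = 1
    · refine ⟨List.replicate N 1, List.length_replicate .., ?_, ?_⟩
      · intro y hy; rw [List.eq_of_mem_replicate hy]; exact ⟨1, by rw [h]; group⟩
      · rw [List.prod_replicate, one_pow, hz i h]
    · exact hw (f i) (g i) h
  choose L hL1 hL2 hL3 using hex
  have hex2 : ∀ i, ∀ j : Fin N, ∃ c : S,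
      (L i).get (Fin.cast (hL1 i).symm j) = c * f i * c⁻¹ :=
    fun i j => hL2 i _ (List.get_mem ..)
  choose C hC using hex2
  have key : g = (List.ofFn (fun j : Fin N =>
      (fun i => C i j) * f * (fun i => C i j)⁻¹)).prod := by
    funext i
    rw [Pi.list_prod_apply, List.map_ofFn]
    have heq : (List.ofFn ((fun h : I → S => h i) ∘
        (fun j : Fin N => (fun i' => C i' j) * f * (fun i' => C i' j)⁻¹))) = L i := by
      refine List.ext_get (by simp [hL1 i]) ?_
      intro m h1 h2
      simp only [List.get_ofFn]
      exact (hC i ⟨m, by simpa using h1⟩).symm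
    rw [heq, hL3]
  rw [key, map_list_prod]
  refine List.prod_eq_one ?_
  intro x hx
  rw [List.mem_map] at hx
  obtain ⟨h', hh', rfl⟩ := hx
  rw [List.mem_ofFn] at hh'
  obtain ⟨j, rfl⟩ := hh'
  rw [map_mul, map_mul, hf, map_inv, mul_one, mul_inv_cancel]

end Ker

def GModel (S : Type*) [Fintype S] : Type := Fin (Fintype.card S)

noncomputable def gmodelEquiv (S : Type*) [Fintype S] : GModel S ≃ S := (Fintype.equivFin S).symm

noncomputable def gmodelGroup (S : Type*) [Fintype S] [Group S] : Group (GModel S) :=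
  (gmodelEquiv S).group

noncomputable def gmodelMulEquiv (S : Type*) [Fintype S] [Group S] :
    letI := gmodelGroup S; GModel S ≃* S := by
  letI := gmodelGroup S
  exact (gmodelEquiv S).mulEquiv
/-- A finite group is semisimple if it is isomorphic to a direct product of finitely many
nonabelian finite simple groups. -/
def IsSemisimpleFinite (D : Type*) [Group D] : Prop :=
  ∃ (k : ℕ) (T : Fin k → Type) (_ : ∀ i, Group (T i)),
    (∀ i, Finite (T i)) ∧ (∀ i, IsSimpleGroup (T i)) ∧
    (∀ i, ∃ a b : T i, a * b ≠ b * a) ∧ Nonempty (D ≃* ∀ i, T i)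

/-- If `S` is a finite nonabelian simple group and `G = S^I`, then every finite quotient
of `G` (by an abstract normal subgroup) is semisimple. -/
theorem stmt10 (S : Type*) [Group S] [Finite S] (hS : IsSimpleGroup S)
    (hna : ∃ a b : S, a * b ≠ b * a) (I : Type*) (D : Type*) [Group D] [Finite D]
    (φ : (I → S) →* D) (hφ : Function.Surjective φ) :
    IsSemisimpleFinite D := by
  classical
  obtain ⟨a₀, b₀, hab₀⟩ := id hna
  have hex₀ : ∃ s : S, s ≠ 1 := by
    by_contra h
    push_neg at h
    exact hab₀ (by rw [h a₀, h b₀])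
  obtain ⟨s₀, hs₀⟩ := hex₀
  set 𝒰 : Set (Ultrafilter I) := {U | ∀ f : I → S, φ f = 1 → {i | f i = 1} ∈ U} with h𝒰def
  -- ulim is constant on fibers of φ for U ∈ 𝒰
  have hfib : ∀ U ∈ 𝒰, ∀ f g : I → S, φ f = φ g → ulim U f = ulim U g := by
    intro U hU f g hfg
    have h1 : φ (f * g⁻¹) = 1 := by rw [map_mul, map_inv, hfg, mul_inv_cancel]
    have h2 : {i | (f * g⁻¹) i = 1} ∈ U := hU _ h1
    refine ulim_eq_of_mem ?_
    refine Filter.mem_of_superset (Filter.inter_mem h2 (ulim_mem U g)) ?_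
    rintro i ⟨hi1, hi2⟩
    simp only [Set.mem_setOf_eq, Pi.mul_apply, Pi.inv_apply] at *
    rw [mul_inv_eq_one.1 hi1, hi2]
  -- 𝒰 is finite
  haveI hUfin : Finite ↥𝒰 := by
    have hinj : Function.Injective
        (fun (U : ↥𝒰) => fun (d : D) => ulim U.1 (Function.surjInv hφ d)) := by
      intro U V hUV
      by_contra hne
      have hne' : U.1 ≠ V.1 := fun h => hne (Subtype.ext h)
      obtain ⟨A, hAU, hAV⟩ := ultrafilter_exists_mem_notMem hne'
      set f : I → S := fun i => if i ∈ A then s₀ else 1 with hfdef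
      have hUf : ulim U.1 f = s₀ := ulim_eq_of_mem
        (Filter.mem_of_superset hAU (by intro i hi; simp [hfdef, hi]))
      have hVf : ulim V.1 f = 1 := ulim_eq_of_mem
        (Filter.mem_of_superset ((Ultrafilter.compl_mem_iff_notMem).2 hAV)
          (by intro i hi; simp only [Set.mem_compl_iff] at hi; simp [hfdef, hi]))
      have h1 : ulim U.1 (Function.surjInv hφ (φ f)) = ulim U.1 f :=
        hfib U.1 U.2 _ _ (Function.surjInv_eq hφ (φ f))
      have h2 : ulim V.1 (Function.surjInv hφ (φ f)) = ulim V.1 f :=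
        hfib V.1 V.2 _ _ (Function.surjInv_eq hφ (φ f))
      have h3 := congrFun hUV (φ f)
      simp only at h3
      rw [h1, h2, hUf, hVf] at h3
      exact hs₀ h3
    exact Finite.of_injective _ hinj
  -- the comparison homomorphism
  set Ψ : (I → S) →* (↥𝒰 → S) := Pi.monoidHom (fun U => ulimHom U.1) with hΨdef
  -- the filter of zero-sets of kernel elements
  set F : Filter I :=
    { sets := {A | ∃ g : I → S, φ g = 1 ∧ {i | g i = 1} ⊆ A}
      univ_sets := ⟨1, map_one φ, Set.subset_univ _⟩
      sets_of_superset := by rintro A B ⟨g, h1, h2⟩ hAB; exact ⟨g, h1, h2.trans hAB⟩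
      inter_sets := by
        rintro A B ⟨g₁, hg₁, hs₁⟩ ⟨g₂, hg₂, hs₂⟩
        refine ⟨fun i => if g₁ i = 1 then g₂ i else g₁ i, ?_, ?_⟩
        · have hb : φ (fun i => if g₁ i = 1 then g₂ i else 1) = 1 := by
            refine ker_support hS hna φ hg₂ ?_
            intro i h
            simp [h]
          have hsplit : (fun i => if g₁ i = 1 then g₂ i else g₁ i) =
              g₁ * (fun i => if g₁ i = 1 then g₂ i else 1) := by
            funext i
            by_cases h : g₁ i = 1 <;> simp [Pi.mul_apply, h]
          rw [hsplit, map_mul, hg₁, hb, one_mul]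
        · intro i hi
          simp only [Set.mem_setOf_eq] at hi
          by_cases h : g₁ i = 1
          · rw [if_pos h] at hi
            exact ⟨hs₁ h, hs₂ hi⟩
          · rw [if_neg h] at hi; exact absurd hi h } with hFdef
  have hker2 : ∀ f : I → S, φ f ≠ 1 → ∃ U : ↥𝒰, ulim U.1 f ≠ 1 := by
    intro f hf
    have hne : Filter.NeBot (F ⊓ Filter.principal {i | f i = 1}ᶜ) := by
      rw [Filter.inf_principal_neBot_iff]
      intro A hA
      obtain ⟨g, hg, hsub⟩ := hA
      by_contra hemp
      rw [Set.not_nonempty_iff_eq_empty] at hemp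
      have hsub2 : ∀ i, g i = 1 → f i = 1 := by
        intro i hi
        by_contra hfi
        have hmem : i ∈ A ∩ {i | f i = 1}ᶜ := ⟨hsub hi, hfi⟩
        rw [hemp] at hmem; exact hmem
      exact hf (ker_support hS hna φ hg hsub2)
    set U : Ultrafilter I := Ultrafilter.of (F ⊓ Filter.principal {i | f i = 1}ᶜ) with hUdef
    have hle := Ultrafilter.of_le (F ⊓ Filter.principal {i | f i = 1}ᶜ)
    have hU𝒰 : U ∈ 𝒰 := by
      intro g hg
      exact hle (Filter.mem_inf_of_left ⟨g, hg, subset_rfl⟩)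
    refine ⟨⟨U, hU𝒰⟩, ?_⟩
    intro h1
    have h2 : {i | f i = 1} ∈ U := mem_of_ulim_eq_one h1
    have h3 : {i | f i = 1}ᶜ ∈ U := hle (Filter.mem_inf_of_right (Filter.mem_principal_self _))
    have h4 := Filter.inter_mem h2 h3
    rw [Set.inter_compl_self] at h4
    exact Ultrafilter.empty_notMem h4
  have hkerEq : Ψ.ker = φ.ker := by
    ext f
    simp only [MonoidHom.mem_ker]
    constructor
    · intro h
      by_contra hne
      obtain ⟨U, hU⟩ := hker2 f hne
      exact hU (congrFun h U)
    · intro h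
      funext U
      exact ulim_eq_of_mem (U.2 f h)
  -- surjectivity of Ψ
  have hΨsurj : Function.Surjective Ψ := by
    have hA : ∀ U V : ↥𝒰, ∃ A : Set I, U ≠ V → (A ∈ U.1 ∧ A ∉ V.1) := by
      intro U V
      by_cases h : U = V
      · exact ⟨Set.univ, fun hc => absurd h hc⟩
      · obtain ⟨A, h1, h2⟩ :=
          ultrafilter_exists_mem_notMem (fun he : U.1 = V.1 => h (Subtype.ext he))
        exact ⟨A, fun _ => ⟨h1, h2⟩⟩
    choose A hA using hA
    set B : ↥𝒰 → Set I :=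
      fun U => ⋂ V : ↥𝒰, (if V = U then Set.univ else A U V ∩ (A V U)ᶜ) with hBdef
    have hBU : ∀ U : ↥𝒰, B U ∈ U.1 := by
      intro U
      refine Filter.iInter_mem.2 ?_
      intro V
      by_cases h : V = U
      · rw [if_pos h]; exact Filter.univ_mem
      · rw [if_neg h]
        refine Filter.inter_mem ((hA U V (Ne.symm h)).1) ?_
        exact (Ultrafilter.compl_mem_iff_notMem).2 ((hA V U h).2)
    have hBdisj : ∀ U V : ↥𝒰, U ≠ V → B U ∩ B V = ∅ := by
      intro U V h
      rw [Set.eq_empty_iff_forall_notMem]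
      rintro i ⟨hiU, hiV⟩
      have h1 := Set.mem_iInter.1 hiU V
      have h2 := Set.mem_iInter.1 hiV U
      rw [if_neg (Ne.symm h)] at h1
      rw [if_neg h] at h2
      exact h2.2 h1.1
    intro t
    refine ⟨fun i => if h : ∃ U : ↥𝒰, i ∈ B U then t h.choose else 1, ?_⟩
    funext U
    show ulim U.1 _ = t U
    refine ulim_eq_of_mem (Filter.mem_of_superset (hBU U) ?_)
    intro i hi
    have hex : ∃ V : ↥𝒰, i ∈ B V := ⟨U, hi⟩
    simp only [Set.mem_setOf_eq, dif_pos hex]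
    by_cases h : hex.choose = U
    · rw [h]
    · exfalso
      have h5 := hBdisj _ _ h
      rw [Set.eq_empty_iff_forall_notMem] at h5
      exact h5 i ⟨hex.choose_spec, hi⟩
  -- assemble the isomorphism
  have e1 : D ≃* ((I → S) ⧸ φ.ker) := (QuotientGroup.quotientKerEquivOfSurjective φ hφ).symm
  have e2 : ((I → S) ⧸ Ψ.ker) ≃* (↥𝒰 → S) := QuotientGroup.quotientKerEquivOfSurjective Ψ hΨsurj
  have eD : D ≃* (↥𝒰 → S) :=
    e1.trans ((QuotientGroup.quotientMulEquivOfEq hkerEq.symm).trans e2)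
  letI : Fintype S := Fintype.ofFinite S
  letI := gmodelGroup S
  have eM := gmodelMulEquiv S
  haveI hMfin : Finite (GModel S) := Finite.of_equiv S eM.symm.toEquiv
  haveI hMsimp : IsSimpleGroup (GModel S) := by
    haveI := hS
    haveI : Nontrivial (GModel S) := (gmodelEquiv S).nontrivial
    exact IsSimpleGroup.isSimpleGroup_of_surjective eM.symm.toMonoidHom eM.symm.surjective
  letI := Fintype.ofFinite ↥𝒰
  have eidx : ↥𝒰 ≃ Fin (Fintype.card ↥𝒰) := Fintype.equivFin ↥𝒰
  refine ⟨Fintype.card ↥𝒰, fun _ => GModel S, fun _ => inferInstance,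
    fun _ => inferInstance, fun _ => inferInstance, fun _ => ?_, ?_⟩
  · refine ⟨eM.symm a₀, eM.symm b₀, fun h => hab₀ ?_⟩
    rw [← map_mul, ← map_mul] at h
    exact eM.symm.injective h
  · exact ⟨eD.trans (MulEquiv.arrowCongr eidx eM.symm)⟩
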